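/- If (𝓕_ℓ)_{ℓ∈ω} is a countable family of non-meager filters on ω (each containing all cofinite sets), then the intersection ⋂_{ℓ∈ω} 𝓕_ℓ is a non-meager filter on ω. -/

import Mathlib

open Set

lemma chi_eq_true' {A : Set ℕ} {i : ℕ} :
    (@decide (i ∈ A) (Classical.propDecidable _)) = true ↔ i ∈ A := by
  exact @decide_eq_true_iff _ (Classical.propDecidable _)

lemma exists_cylinder_subset {U : Set (ℕ → Bool)} (hU : IsOpen U) {x : ℕ → Bool} (hx : x ∈ U) :
    ∃ n, ∀ y : ℕ → Bool, (∀ i < n, y i = x i) → y ∈ U := by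
  obtain ⟨I, u, hu, hsub⟩ := isOpen_pi_iff.mp hU x hx
  refine ⟨(I.sup id) + 1, fun y hy => hsub fun i hi => ?_⟩
  have h1 : i ≤ I.sup id := Finset.le_sup (f := id) hi
  rw [hy i (by omega)]
  exact (hu i hi).2

lemma cylinder_isOpen (x : ℕ → Bool) (m : ℕ) : IsOpen {y : ℕ → Bool | ∀ i < m, y i = x i} := by
  have : {y : ℕ → Bool | ∀ i < m, y i = x i}
      = Set.pi (↑(Finset.range m)) (fun i => ({x i} : Set Bool)) := by
    ext y; simp [Set.mem_pi]
  rw [this]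
  exact isOpen_set_pi (Finset.finite_toSet _) (fun a _ => isOpen_discrete _)

lemma nwd_step {D : Set (ℕ → Bool)} (hD : IsNowhereDense D) (m : ℕ) :
    ∃ M, m < M ∧ ∃ Φ : (ℕ → Bool) → (ℕ → Bool),
      ∀ x w : ℕ → Bool, (∀ j < m, w j = x j) →
        (∀ j, m ≤ j → j < M → w j = Φ x j) → w ∉ D := by
  classical
  have hopen : IsOpen (closure D)ᶜ ∧ Dense (closure D)ᶜ :=
    isClosed_isNowhereDense_iff_compl.mp ⟨isClosed_closure, hD.closure⟩
  have key : ∀ s : Fin m → Bool, ∃ y : ℕ → Bool, ∃ n : ℕ,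
      (∀ i : ℕ, ∀ h : i < m, y i = s ⟨i, h⟩) ∧
      ∀ w : ℕ → Bool, (∀ j < n, w j = y j) → w ∉ closure D := by
    intro s
    set x0 : ℕ → Bool := fun i => if h : i < m then s ⟨i, h⟩ else false with hx0
    obtain ⟨y, hy1, hy2⟩ := hopen.2.exists_mem_open (cylinder_isOpen x0 m) ⟨x0, fun _ _ => rfl⟩
    obtain ⟨n, hn⟩ := exists_cylinder_subset hopen.1 hy1
    refine ⟨y, n, fun i h => ?_, fun w hw => hn w hw⟩
    have := hy2 i h
    simp only [x0, dif_pos h] at this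
    exact this
  choose y n hy hn using key
  refine ⟨max (m + 1) (Finset.univ.sup n), by omega, fun x => y (fun i => x i), ?_⟩
  intro x w h1 h2
  set s : Fin m → Bool := fun i => x i with hs
  intro hwD
  refine hn s w (fun j hj => ?_) (subset_closure hwD)
  rcases lt_or_ge j m with h | h
  · rw [h1 j h, hy s j h]
  · refine h2 j h (lt_of_lt_of_le hj ?_)
    exact le_max_of_le_right (Finset.le_sup (Finset.mem_univ s))

lemma nwd_union {s t : Set (ℕ → Bool)} (hs : IsClosed s) (hs' : IsNowhereDense s)
    (ht : IsClosed t) (ht' : IsNowhereDense t) :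
    IsClosed (s ∪ t) ∧ IsNowhereDense (s ∪ t) := by
  have h1 := isClosed_isNowhereDense_iff_compl.mp ⟨hs, hs'⟩
  have h2 := isClosed_isNowhereDense_iff_compl.mp ⟨ht, ht'⟩
  rw [isClosed_isNowhereDense_iff_compl, compl_union]
  exact ⟨h1.1.inter h2.1, h1.2.inter_of_isOpen_left h2.2 h1.1⟩

def IsFilterOn {I : Type*} (F : Set (Set I)) : Prop :=
  (∀ s ∈ F, s.Nonempty) ∧ (∀ s ∈ F, ∀ t ∈ F, s ∩ t ∈ F) ∧
    (∀ s ∈ F, ∀ t : Set I, s ⊆ t → t ∈ F) ∧ (∀ s : Set I, sᶜ.Finite → s ∈ F)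

noncomputable def chi {I : Type*} (s : Set I) : I → Bool :=
  fun i => @decide (i ∈ s) (Classical.propDecidable _)

lemma nonmeagre_exists_miss {F : Set (Set ℕ)} (hnm : ¬ IsMeagre (chi '' F))
    (b : ℕ → ℕ) (hb : StrictMono b) :
    ∃ A ∈ F, {k | A ∩ Set.Ico (b k) (b (k+1)) = ∅}.Infinite := by
  by_contra hcon
  push_neg at hcon
  apply hnm
  set D : ℕ → Set (ℕ → Bool) :=
    fun N => {x | ∀ k, N ≤ k → ∃ j, j ∈ Set.Ico (b k) (b (k+1)) ∧ x j = true} with hD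
  have hDclosed : ∀ N, IsClosed (D N) := by
    intro N
    have : D N = ⋂ (k : ℕ) (_ : N ≤ k),
        ⋃ j ∈ Set.Ico (b k) (b (k+1)), {x : ℕ → Bool | x j = true} := by
      ext x; simp [hD]
    rw [this]
    refine isClosed_iInter fun k => isClosed_iInter fun _ => ?_
    refine Set.Finite.isClosed_biUnion (Set.finite_Ico _ _) fun j _ => ?_
    have : {x : ℕ → Bool | x j = true} = (fun x : ℕ → Bool => x j) ⁻¹' {true} := rfl
    rw [this]
    exact IsClosed.preimage (continuous_apply j) (isClosed_discrete {true})
  have hDnwd : ∀ N, IsNowhereDense (D N) := by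
    intro N
    rw [(hDclosed N).isNowhereDense_iff, Set.eq_empty_iff_forall_notMem]
    intro x hx
    obtain ⟨n, hn⟩ := exists_cylinder_subset isOpen_interior hx
    set y : ℕ → Bool := fun j => if j < n then x j else false with hy
    have hyD : y ∈ D N := interior_subset (hn y (fun i hi => by simp [hy, hi]))
    obtain ⟨j, hj1, hj2⟩ := hyD (max N n) (le_max_left _ _)
    have : n ≤ j := le_trans (le_trans (le_max_right N n) (hb.le_apply)) hj1.1
    simp [hy, Nat.not_lt.mpr this] at hj2
  rw [isMeagre_iff_countable_union_isNowhereDense]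
  refine ⟨Set.range D, ?_, Set.countable_range _, ?_⟩
  · rintro t ⟨N, rfl⟩; exact hDnwd N
  · rintro x ⟨A, hA, rfl⟩
    obtain ⟨N, hN⟩ := (hcon A hA).bddAbove
    refine Set.mem_sUnion.mpr ⟨D (N + 1), ⟨N + 1, rfl⟩, fun k hk => ?_⟩
    have : ¬ (A ∩ Set.Ico (b k) (b (k+1)) = ∅) := by
      intro h
      exact absurd (hN h) (by omega)
    obtain ⟨j, hjA, hjI⟩ := Set.nonempty_iff_ne_empty.mpr this
    exact ⟨j, hjI, by simpa [chi] using chi_eq_true'.mpr hjA⟩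

lemma coarsen {F : Set (Set ℕ)} (hnm : ¬ IsMeagre (chi '' F))
    {a : ℕ → ℕ} (ha : StrictMono a) {K : Set ℕ} (hK : K.Infinite) :
    ∃ A ∈ F, {k | k ∈ K ∧ A ∩ Set.Ico (a k) (a (k+1)) = ∅}.Infinite := by
  have hK' : {k | k ∈ K}.Infinite := hK
  set m : ℕ → ℕ := fun i => Nat.nth (· ∈ K) i with hm
  have hmmono : StrictMono m := Nat.nth_strictMono hK'
  have hmmem : ∀ i, m i ∈ K := fun i => Nat.nth_mem_of_infinite hK' i
  have hbmono : StrictMono (fun i => a (m i + 1)) :=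
    ha.comp (fun i j hij => by have := hmmono hij; omega)
  obtain ⟨A, hAF, hAinf⟩ := nonmeagre_exists_miss hnm _ hbmono
  have hinj : Function.Injective (fun i : ℕ => m (i + 1)) := by
    intro i j h
    have := hmmono.injective (a₁ := i + 1) (a₂ := j + 1) (by simpa using h)
    omega
  refine ⟨A, hAF, Set.Infinite.mono ?_ (hAinf.image hinj.injOn)⟩
  rintro k ⟨i, hi, rfl⟩
  refine ⟨hmmem (i+1), ?_⟩
  simp only [Set.mem_setOf_eq] at hi
  rw [Set.eq_empty_iff_forall_notMem] at hi ⊢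
  rintro j ⟨hjA, hj⟩
  refine hi j ⟨hjA, ?_, hj.2⟩
  refine le_trans (ha.monotone ?_) hj.1
  have := hmmono (Nat.lt_succ_self i)
  simp only [Nat.succ_eq_add_one] at this
  show m i + 1 ≤ m (i + 1)
  omega

lemma chi_spec (A : Set ℕ) (i : ℕ) : chi A i = true ↔ i ∈ A := chi_eq_true'

lemma meagre_filter_feeble {F : Set (Set ℕ)} (hf : IsFilterOn F) (hm : IsMeagre (chi '' F)) :
    ∃ a : ℕ → ℕ, StrictMono a ∧ ∀ A ∈ F, {k | A ∩ Set.Ico (a k) (a (k+1)) = ∅}.Finite := by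
  classical
  obtain ⟨S, hSnwd, hScnt, hSsub⟩ := isMeagre_iff_countable_union_isNowhereDense.mp hm
  obtain ⟨C, hC⟩ := (hScnt.insert ∅).exists_eq_range (Set.insert_nonempty _ _)
  have hCnwd : ∀ n, IsNowhereDense (C n) := by
    intro n
    have h : C n ∈ insert ∅ S := hC ▸ Set.mem_range_self n
    rcases Set.mem_insert_iff.mp h with h | h
    · rw [h]; exact isNowhereDense_empty
    · exact hSnwd _ h
  have hCcover : ∀ x ∈ chi '' F, ∃ n, x ∈ C n := by
    intro x hx
    obtain ⟨t, htS, hxt⟩ := hSsub hx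
    have h : t ∈ Set.range C := hC ▸ Set.mem_insert_of_mem _ htS
    obtain ⟨n, rfl⟩ := h
    exact ⟨n, hxt⟩
  set D : ℕ → Set (ℕ → Bool) := fun n => Nat.rec (motive := fun _ => Set (ℕ → Bool))
      (closure (C 0)) (fun n Dn => Dn ∪ closure (C (n+1))) n with hDdef
  have hD1 : ∀ n, D (n+1) = D n ∪ closure (C (n+1)) := fun n => rfl
  have hDcl : ∀ n, IsClosed (D n) ∧ IsNowhereDense (D n) := by
    intro n; induction n with
    | zero => exact ⟨isClosed_closure, (hCnwd 0).closure⟩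
    | succ n ih => exact nwd_union ih.1 ih.2 isClosed_closure ((hCnwd (n+1)).closure)
  have hCD : ∀ n, C n ⊆ D n := by
    intro n; cases n with
    | zero => exact subset_closure
    | succ n => exact subset_closure.trans Set.subset_union_right
  have hDmono : ∀ n m, n ≤ m → D n ⊆ D m := by
    intro n m hnm
    induction m with
    | zero => rw [Nat.le_zero.mp hnm]
    | succ m ih =>
      rcases Nat.eq_or_lt_of_le hnm with h | h
      · rw [h]
      · exact (ih (by omega)).trans (by rw [hD1]; exact Set.subset_union_left)
  have step : ∀ k m, ∃ M, m < M ∧ ∃ Φ : (ℕ → Bool) → (ℕ → Bool),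
      ∀ x w : ℕ → Bool, (∀ j < m, w j = x j) → (∀ j, m ≤ j → j < M → w j = Φ x j) →
        w ∉ D k := fun k m => nwd_step (hDcl k).2 m
  choose M hM Φ hΦ using step
  set a : ℕ → ℕ := fun k => Nat.rec (motive := fun _ => ℕ) 0 (fun k ak => M k ak) k with hadef
  have ha1 : ∀ k, a (k+1) = M k (a k) := fun k => rfl
  have hamono : StrictMono a := strictMono_nat_of_lt_succ (fun k => by rw [ha1]; exact hM k (a k))
  refine ⟨a, hamono, fun A hA => ?_⟩
  by_contra hinf
  set p : ℕ → Prop := fun k => A ∩ Set.Ico (a k) (a (k+1)) = ∅ with hp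
  have hKinf : {k | p k}.Infinite := hinf
  set ki : ℕ → ℕ := fun i => Nat.nth p i with hki
  have hkimono : StrictMono ki := Nat.nth_strictMono hKinf
  have hkip : ∀ i, p (ki i) := fun i => Nat.nth_mem_of_infinite hKinf i
  set z : ℕ → (ℕ → Bool) := fun i => Nat.rec (motive := fun _ => ℕ → Bool) (chi A)
      (fun i zi => fun j => if a (ki i) ≤ j ∧ j < a (ki i + 1)
        then Φ (ki i) (a (ki i)) zi j else zi j) i with hz
  have hz1 : ∀ i j, z (i+1) j = if a (ki i) ≤ j ∧ j < a (ki i + 1)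
      then Φ (ki i) (a (ki i)) (z i) j else z i j := fun i j => rfl
  have stab : ∀ m i j, i ≤ m → j < a (ki i) → z m j = z i j := by
    intro m
    induction m with
    | zero => intro i j him _; rw [Nat.le_zero.mp him]
    | succ m ih =>
      intro i j him hj
      rcases Nat.eq_or_lt_of_le him with h | h
      · rw [h]
      · have him' : i ≤ m := by omega
        rw [hz1, if_neg, ih i j him' hj]
        rintro ⟨h1, _⟩
        exact absurd (lt_of_lt_of_le hj (hamono.monotone (hkimono.monotone him'))) (not_lt.mpr h1)
  have y_eq : ∀ i j, j < a (ki i) → z (j+1) j = z i j := by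
    intro i j hj
    have h2 : z (max i (j+1)) j = z (j+1) j :=
      stab _ (j+1) j (le_max_right _ _)
        (lt_of_lt_of_le (Nat.lt_succ_self j) (hkimono.le_apply.trans hamono.le_apply))
    rw [← h2]
    exact stab _ i j (le_max_left _ _) hj
  set y : ℕ → Bool := fun j => z (j+1) j with hy
  have hyD : ∀ i, y ∉ D (ki i) := by
    intro i
    refine hΦ (ki i) (a (ki i)) (z i) y (fun j hj => y_eq i j hj) (fun j hj1 hj2 => ?_)
    have hj2' : j < a (ki i + 1) := by rw [ha1]; exact hj2
    have hlt : j < a (ki (i+1)) := lt_of_lt_of_le hj2'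
      (hamono.monotone (Nat.succ_le_of_lt (hkimono (Nat.lt_succ_self i))))
    have : y j = z (i+1) j := y_eq (i+1) j hlt
    rw [this, hz1, if_pos ⟨hj1, hj2'⟩]
  set B : Set ℕ := {j | y j = true} with hB
  have hAB : A ⊆ B := by
    intro j hjA
    have hall : ∀ m, z m j = true := by
      intro m; induction m with
      | zero => exact (chi_spec A j).mpr hjA
      | succ m ih =>
        rw [hz1, if_neg, ih]
        rintro ⟨h1, h2⟩
        have hpm := hkip m
        rw [hp, Set.eq_empty_iff_forall_notMem] at hpm
        exact hpm j ⟨hjA, h1, h2⟩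
    exact hall (j+1)
  have hBF : B ∈ F := hf.2.2.1 A hA B hAB
  have hchiB : chi B = y := by
    funext j
    by_cases hj : j ∈ B
    · rw [(chi_spec B j).mpr hj]; exact (hj : y j = true).symm
    · have h1 : chi B j = false := by
        cases hcb : chi B j
        · rfl
        · exact absurd ((chi_spec B j).mp hcb) hj
      have h2 : y j = false := by
        cases hyj : y j
        · rfl
        · exact absurd (show j ∈ B from hyj) hj
      rw [h1, h2]
  obtain ⟨n, hn⟩ := hCcover (chi B) ⟨B, hBF, rfl⟩
  have hfin : chi B ∈ D (ki n) := hDmono n (ki n) hkimono.le_apply (hCD n hn)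
  rw [hchiB] at hfin
  exact hyD n hfin

theorem inter_nonmeager_filters (F : ℕ → Set (Set ℕ)) (hF : ∀ ℓ, IsFilterOn (F ℓ))
    (hnm : ∀ ℓ, ¬ IsMeagre (chi '' F ℓ)) :
    IsFilterOn (⋂ ℓ, F ℓ) ∧ ¬ IsMeagre (chi '' ⋂ ℓ, F ℓ) := by
  classical
  have hGfil : IsFilterOn (⋂ ℓ, F ℓ) :=
    ⟨fun s hs => (hF 0).1 s (Set.mem_iInter.mp hs 0),
      fun s hs t ht => Set.mem_iInter.mpr fun ℓ =>
        (hF ℓ).2.1 s (Set.mem_iInter.mp hs ℓ) t (Set.mem_iInter.mp ht ℓ),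
      fun s hs t hst => Set.mem_iInter.mpr fun ℓ =>
        (hF ℓ).2.2.1 s (Set.mem_iInter.mp hs ℓ) t hst,
      fun s hfin => Set.mem_iInter.mpr fun ℓ => (hF ℓ).2.2.2 s hfin⟩
  refine ⟨hGfil, fun hm => ?_⟩
  obtain ⟨a, ha, hfeeble⟩ := meagre_filter_feeble hGfil hm
  set Inv : ℕ → (Set ℕ × Set ℕ × ℕ) → Prop := fun ℓ q =>
    q.1 ∈ F ℓ ∧ q.2.1.Infinite ∧ (∀ k ∈ q.2.1, q.1 ∩ Set.Ico (a k) (a (k+1)) = ∅) ∧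
      q.2.2 ∈ q.2.1 with hInv
  set Rel : ℕ → (Set ℕ × Set ℕ × ℕ) → (Set ℕ × Set ℕ × ℕ) → Prop := fun ℓ q q' =>
    Inv (ℓ+1) q' ∧ q'.2.1 ⊆ q.2.1 ∧ (∀ k ∈ q'.2.1, q.2.2 < k) ∧
      q'.1 ∩ Set.Iio (a (q.2.2 + 1)) = ∅ with hRel
  have base : ∃ q, Inv 0 q := by
    obtain ⟨A, hAF, hAinf⟩ := nonmeagre_exists_miss (hnm 0) a ha
    obtain ⟨n0, hn0⟩ := hAinf.nonempty
    exact ⟨(A, {k | A ∩ Set.Ico (a k) (a (k+1)) = ∅}, n0), hAF, hAinf, fun k hk => hk, hn0⟩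
  have step : ∀ ℓ (q : Set ℕ × Set ℕ × ℕ), Inv ℓ q → ∃ q', Rel ℓ q q' := by
    intro ℓ q hq
    have hK' : (q.2.1 \ Set.Iic q.2.2).Infinite := hq.2.1.diff (Set.finite_Iic _)
    obtain ⟨A, hAF, hAinf⟩ := coarsen (hnm (ℓ+1)) ha hK'
    have hA'F : A \ Set.Iio (a (q.2.2 + 1)) ∈ F (ℓ+1) := by
      have h1 : (Set.Iio (a (q.2.2+1)))ᶜ ∈ F (ℓ+1) :=
        (hF (ℓ+1)).2.2.2 _ (by rw [compl_compl]; exact Set.finite_Iio _)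
      rw [Set.diff_eq]
      exact (hF (ℓ+1)).2.1 A hAF _ h1
    obtain ⟨n', hn'⟩ := hAinf.nonempty
    refine ⟨(A \ Set.Iio (a (q.2.2 + 1)),
        {k | k ∈ q.2.1 \ Set.Iic q.2.2 ∧ A ∩ Set.Ico (a k) (a (k+1)) = ∅}, n'),
      ⟨hA'F, hAinf, fun k hk => ?_, hn'⟩, fun k hk => hk.1.1, fun k hk => ?_, ?_⟩
    · apply Set.eq_empty_of_subset_empty
      rw [← hk.2]
      exact Set.inter_subset_inter_left _ Set.diff_subset
    · have := hk.1.2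
      simp only [Set.mem_Iic] at this
      omega
    · ext j
      simp only [Set.mem_inter_iff, Set.mem_diff, Set.mem_Iio, Set.mem_empty_iff_false,
        iff_false]
      tauto
  let g : ∀ ℓ : ℕ, {q : Set ℕ × Set ℕ × ℕ // Inv ℓ q} := fun ℓ =>
    Nat.rec ⟨base.choose, base.choose_spec⟩
      (fun ℓ p => ⟨(step ℓ p.1 p.2).choose, ((step ℓ p.1 p.2).choose_spec).1⟩) ℓ
  have hg : ∀ ℓ, Rel ℓ (g ℓ).1 (g (ℓ+1)).1 := fun ℓ => (step ℓ (g ℓ).1 (g ℓ).2).choose_spec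
  set An : ℕ → Set ℕ := fun ℓ => (g ℓ).1.1 with hAn
  set Kn : ℕ → Set ℕ := fun ℓ => (g ℓ).1.2.1 with hKn
  set nn : ℕ → ℕ := fun ℓ => (g ℓ).1.2.2 with hnn
  have hInvℓ : ∀ ℓ, Inv ℓ (g ℓ).1 := fun ℓ => (g ℓ).2
  have hKchain : ∀ ℓ i, ℓ ≤ i → Kn i ⊆ Kn ℓ := by
    intro ℓ i h
    induction i with
    | zero => rw [Nat.le_zero.mp h]
    | succ i ih =>
      rcases Nat.eq_or_lt_of_le h with h' | h'
      · rw [h']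
      · exact ((hg i).2.1).trans (ih (by omega))
  have hnmem : ∀ ℓ, nn ℓ ∈ Kn ℓ := fun ℓ => (hInvℓ ℓ).2.2.2
  have hnmono : StrictMono nn :=
    strictMono_nat_of_lt_succ (fun ℓ => (hg ℓ).2.2.1 _ (hnmem (ℓ+1)))
  have hdisj : ∀ ℓ i, An ℓ ∩ Set.Ico (a (nn i)) (a (nn i + 1)) = ∅ := by
    intro ℓ i
    rcases le_or_gt ℓ i with h | h
    · exact (hInvℓ ℓ).2.2.1 _ (hKchain ℓ i h (hnmem i))
    · obtain ⟨m, rfl⟩ : ∃ m, ℓ = m + 1 := ⟨ℓ-1, by omega⟩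
      have h4 := (hg m).2.2.2
      rw [Set.eq_empty_iff_forall_notMem] at h4 ⊢
      rintro j ⟨hjA, hj1, hj2⟩
      refine h4 j ⟨hjA, ?_⟩
      have h5 : nn i ≤ nn m := hnmono.monotone (by omega)
      have h6 : a (nn i + 1) ≤ a (nn m + 1) := ha.monotone (by omega)
      exact Set.mem_Iio.mpr (lt_of_lt_of_le hj2 h6)
  set B : Set ℕ := (⋃ i, Set.Ico (a (nn i)) (a (nn i + 1)))ᶜ with hB
  have hBG : B ∈ ⋂ ℓ, F ℓ := by
    refine Set.mem_iInter.mpr fun ℓ => (hF ℓ).2.2.1 (An ℓ) (hInvℓ ℓ).1 B ?_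
    intro j hj
    simp only [hB, Set.mem_compl_iff, Set.mem_iUnion, not_exists]
    intro i hji
    have := hdisj ℓ i
    rw [Set.eq_empty_iff_forall_notMem] at this
    exact this j ⟨hj, hji⟩
  have hmiss := hfeeble B hBG
  have hsub : Set.range nn ⊆ {k | B ∩ Set.Ico (a k) (a (k+1)) = ∅} := by
    rintro k ⟨i, rfl⟩
    rw [Set.mem_setOf_eq, Set.eq_empty_iff_forall_notMem]
    rintro j ⟨hjB, hji⟩
    simp only [hB, Set.mem_compl_iff, Set.mem_iUnion, not_exists] at hjB
    exact hjB i hji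
  exact Set.infinite_range_of_injective hnmono.injective (hmiss.subset hsub)
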